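/- Let L and ΔL be real n×n matrices with L·𝟏 = 0 and ΔL·𝟏 = 0, and set L(ε) = L + ε·ΔL. Suppose there exists ξ₀ ∈ ℝⁿ, entrywise positive, with ξ₀ᵀ L = 0, 𝟏ᵀ ξ₀ = 1, and ker(Lᵀ) ⊆ span{ξ₀}. Then there exist ε₀ > 0 and a function ξ : ℝ → ℝⁿ, real-analytic on the interval (−ε₀, ε₀) with ξ(0) = ξ₀, such that for every ε ∈ (−ε₀, ε₀): ξ(ε)ᵀ L(ε) = 0, 𝟏ᵀ ξ(ε) = 1, and ξ(ε) is entrywise positive; moreover ξ(ε) is the unique vector satisfying ξ(ε)ᵀ L(ε) = 0 and 𝟏ᵀ ξ(ε) = 1 for each such ε. -/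

import Mathlib

open Matrix

theorem analyticAt_det_aux {m : Type*} [Fintype m] [DecidableEq m]
    {M : ℝ → Matrix m m ℝ} {x : ℝ}
    (h : ∀ i j, AnalyticAt ℝ (fun ε => M ε i j) x) :
    AnalyticAt ℝ (fun ε => (M ε).det) x := by
  simp_rw [Matrix.det_apply]
  refine Finset.analyticAt_fun_sum _ fun σ _ => ?_
  have hp : AnalyticAt ℝ (fun ε => ∏ i, M ε (σ i) i) x :=
    Finset.analyticAt_fun_prod _ fun i _ => h (σ i) i
  simpa [Units.smul_def, zsmul_eq_mul] using
    (analyticAt_const (v := ((Equiv.Perm.sign σ : ℤ) : ℝ))).fun_mul hp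

/-- Analyticity of the normalized left zero-eigenvector (stationary distribution)
of the perturbed Laplacian L(ε) = L + ε·ΔL. -/
theorem stmt4 (n : ℕ) (hn : 1 ≤ n)
    (L ΔL : Matrix (Fin n) (Fin n) ℝ)
    (hL1 : L *ᵥ (fun _ => (1 : ℝ)) = 0)
    (hΔL1 : ΔL *ᵥ (fun _ => (1 : ℝ)) = 0)
    (ξ₀ : Fin n → ℝ) (hpos : ∀ i, 0 < ξ₀ i)
    (hstat : Lᵀ *ᵥ ξ₀ = 0) (hnorm : ∑ i, ξ₀ i = 1)
    (hker : ∀ v : Fin n → ℝ, Lᵀ *ᵥ v = 0 → ∃ c : ℝ, v = c • ξ₀) :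
    ∃ ε₀ > (0 : ℝ), ∃ ξ : ℝ → Fin n → ℝ,
      AnalyticOn ℝ ξ (Set.Ioo (-ε₀) ε₀) ∧ ξ 0 = ξ₀ ∧
      ∀ ε ∈ Set.Ioo (-ε₀) ε₀,
        ((L + ε • ΔL)ᵀ *ᵥ ξ ε = 0 ∧ (∑ i, ξ ε i = 1) ∧ (∀ i, 0 < ξ ε i)) ∧
        (∀ η : Fin n → ℝ, (L + ε • ΔL)ᵀ *ᵥ η = 0 → (∑ i, η i = 1) → η = ξ ε) := by
  have hnR : (n : ℝ) ≠ 0 := Nat.cast_ne_zero.mpr (by omega)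
  set B : ℝ → Matrix (Fin n) (Fin n) ℝ :=
    fun ε => (L + ε • ΔL)ᵀ + Matrix.of (fun _ _ => (1 : ℝ)) with hBdef
  -- row sums of L and ΔL vanish
  have hLrow : ∀ j, ∑ i, L j i = 0 := fun j => by
    simpa [Matrix.mulVec, dotProduct] using congrFun hL1 j
  have hΔrow : ∀ j, ∑ i, ΔL j i = 0 := fun j => by
    simpa [Matrix.mulVec, dotProduct] using congrFun hΔL1 j
  -- column sums of (L + ε•ΔL)ᵀ applied to any v vanish
  have hcol : ∀ (ε : ℝ) (v : Fin n → ℝ), ∑ i, ((L + ε • ΔL)ᵀ *ᵥ v) i = 0 := by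
    intro ε v
    simp only [Matrix.mulVec, dotProduct, Matrix.transpose_apply, Matrix.add_apply,
      Matrix.smul_apply, smul_eq_mul]
    rw [Finset.sum_comm]
    have : ∀ j, ∑ i, (L j i + ε * ΔL j i) * v j = 0 := by
      intro j
      rw [← Finset.sum_mul]
      simp [Finset.sum_add_distrib, ← Finset.mul_sum, hLrow, hΔrow]
    simpa using Finset.sum_congr rfl fun j _ => this j
  -- B ε *ᵥ v decomposition
  have hBmv : ∀ (ε : ℝ) (v : Fin n → ℝ),
      B ε *ᵥ v = (L + ε • ΔL)ᵀ *ᵥ v + (fun _ => ∑ j, v j) := by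
    intro ε v
    funext i
    simp [hBdef, Matrix.add_mulVec, Matrix.mulVec, dotProduct, add_mul,
      Finset.sum_add_distrib]
  -- B 0 applied to ξ₀ is 𝟏
  have hB0ξ₀ : B 0 *ᵥ ξ₀ = (fun _ => (1 : ℝ)) := by
    rw [hBmv]
    funext i
    simp only [Pi.add_apply]
    have h0 : (L + (0:ℝ) • ΔL)ᵀ *ᵥ ξ₀ = 0 := by simpa using hstat
    rw [h0]
    simp [hnorm]
  -- det (B 0) ≠ 0
  have hdet0 : (B 0).det ≠ 0 := by
    intro hd
    obtain ⟨v, hv, hv0⟩ := (Matrix.exists_mulVec_eq_zero_iff).mpr hd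
    have hsum : ∑ j, v j = 0 := by
      have := congrArg (fun w => ∑ i, w i) hv0
      simp only [hBmv, Pi.add_apply, Finset.sum_add_distrib, Pi.zero_apply,
        Finset.sum_const, Finset.card_univ, Fintype.card_fin, nsmul_eq_mul] at this
      rw [hcol 0 v] at this
      simp only [zero_add, Finset.sum_const_zero] at this
      have h' : (n : ℝ) * ∑ j, v j = 0 := by linarith
      exact (mul_eq_zero.mp h').resolve_left hnR
    have hLv : Lᵀ *ᵥ v = 0 := by
      have := hv0
      rw [hBmv, hsum] at this
      have h2 : (L + (0:ℝ) • ΔL)ᵀ *ᵥ v = 0 := by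
        funext i
        have := congrFun this i
        simpa using this
      simpa using h2
    obtain ⟨c, hc⟩ := hker v hLv
    have : c = 0 := by
      have := hsum
      rw [hc] at this
      simp only [Pi.smul_apply, smul_eq_mul, ← Finset.mul_sum, hnorm, mul_one] at this
      exact this
    exact hv (by rw [hc, this, zero_smul])
  -- entries of B are analytic
  have hBent : ∀ (i j : Fin n) (x : ℝ), AnalyticAt ℝ (fun ε => B ε i j) x := by
    intro i j x
    have heq : (fun ε => B ε i j) = fun ε => (Lᵀ i j + 1) + ε * ΔL j i := by
      funext ε
      simp [hBdef]
      ring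
    rw [heq]
    exact analyticAt_const.add (analyticAt_id.mul analyticAt_const)
  -- det ∘ B analytic everywhere
  have hdetA : ∀ x, AnalyticAt ℝ (fun ε => (B ε).det) x :=
    fun x => analyticAt_det_aux (fun i j => hBent i j x)
  -- adjugate entries analytic everywhere
  have hadjA : ∀ (i j : Fin n) (x : ℝ), AnalyticAt ℝ (fun ε => (B ε).adjugate i j) x := by
    intro i j x
    simp_rw [Matrix.adjugate_apply]
    refine analyticAt_det_aux fun a b => ?_
    simp_rw [Matrix.updateRow_apply]
    split_ifs
    · exact analyticAt_const
    · exact hBent a b x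
  set ξ : ℝ → Fin n → ℝ := fun ε => (B ε)⁻¹ *ᵥ (fun _ => (1 : ℝ)) with hξdef
  set S : Set ℝ := {ε | (B ε).det ≠ 0} with hSdef
  have h0S : (0 : ℝ) ∈ S := hdet0
  have hSopen : IsOpen S := by
    have : S = (fun ε => (B ε).det) ⁻¹' {0}ᶜ := rfl
    rw [this]
    exact (isOpen_compl_singleton).preimage
      (continuous_iff_continuousAt.mpr fun x => (hdetA x).continuousAt)
  -- explicit formula for ξ
  have hξformula : ∀ ε i, ξ ε i = ((B ε).det)⁻¹ * ∑ j, (B ε).adjugate i j := by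
    intro ε i
    show ((B ε)⁻¹ *ᵥ (fun _ => (1:ℝ))) i = _
    rw [Matrix.inv_def, Ring.inverse_eq_inv]
    simp [Matrix.smul_mulVec, Matrix.mulVec, dotProduct, Finset.mul_sum]
  -- ξ analytic on S
  have hξA : AnalyticOnNhd ℝ ξ S := by
    intro x hx
    refine AnalyticAt.pi fun i => ?_
    have heq : (fun ε => ξ ε i)
        = fun ε => ((B ε).det)⁻¹ * ∑ j, (B ε).adjugate i j :=
      funext fun ε => hξformula ε i
    rw [heq]
    exact ((hdetA x).inv hx).mul (Finset.analyticAt_fun_sum _ fun j _ => hadjA i j x)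
  -- key properties at any ε ∈ S
  have hmain : ∀ ε ∈ S,
      ((L + ε • ΔL)ᵀ *ᵥ ξ ε = 0 ∧ (∑ i, ξ ε i = 1)) ∧
      (∀ η : Fin n → ℝ, (L + ε • ΔL)ᵀ *ᵥ η = 0 → (∑ i, η i = 1) → η = ξ ε) := by
    intro ε hε
    have hUnit : IsUnit (B ε).det := isUnit_iff_ne_zero.mpr hε
    have hBξ : B ε *ᵥ ξ ε = (fun _ => (1 : ℝ)) := by
      rw [hξdef]
      rw [Matrix.mulVec_mulVec, Matrix.mul_nonsing_inv _ hUnit]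
      simp
    have hsum1 : ∑ i, ξ ε i = 1 := by
      have := congrArg (fun w => ∑ i, w i) hBξ
      simp only [hBmv, Pi.add_apply, Finset.sum_add_distrib, Finset.sum_const,
        Finset.card_univ, Fintype.card_fin, nsmul_eq_mul] at this
      rw [hcol ε (ξ ε)] at this
      simp only [zero_add, Finset.sum_const_zero] at this
      have h' : (n : ℝ) * ∑ i, ξ ε i = (n : ℝ) * 1 := by linarith
      exact mul_left_cancel₀ hnR h'
    have hL0 : (L + ε • ΔL)ᵀ *ᵥ ξ ε = 0 := by
      have := hBξ
      rw [hBmv, hsum1] at this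
      funext i
      have hi := congrFun this i
      simp only [Pi.add_apply] at hi
      show ((L + ε • ΔL)ᵀ *ᵥ ξ ε) i = 0
      linarith
    refine ⟨⟨hL0, hsum1⟩, ?_⟩
    intro η hη1 hη2
    have hBη : B ε *ᵥ η = (fun _ => (1 : ℝ)) := by
      rw [hBmv, hη1, hη2]
      funext i; simp
    have : (B ε)⁻¹ *ᵥ (B ε *ᵥ η) = (B ε)⁻¹ *ᵥ (fun _ => (1 : ℝ)) := by rw [hBη]
    rwa [Matrix.mulVec_mulVec, Matrix.nonsing_inv_mul _ hUnit, Matrix.one_mulVec] at this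
  -- ξ 0 = ξ₀
  have hξ0 : ξ 0 = ξ₀ := by
    have hUnit : IsUnit (B 0).det := isUnit_iff_ne_zero.mpr hdet0
    have : (B 0)⁻¹ *ᵥ (B 0 *ᵥ ξ₀) = ξ₀ := by
      rw [Matrix.mulVec_mulVec, Matrix.nonsing_inv_mul _ hUnit, Matrix.one_mulVec]
    rw [hξdef]
    rw [← hB0ξ₀]
    exact this
  -- eventual positivity and membership in S near 0
  have hev : ∀ᶠ ε in nhds 0, ε ∈ S ∧ ∀ i, 0 < ξ ε i := by
    have hc : ContinuousAt ξ 0 := (hξA 0 h0S).continuousAt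
    refine (hSopen.eventually_mem h0S).and ?_
    rw [Filter.eventually_all]
    intro i
    have hci : ContinuousAt (fun ε => ξ ε i) 0 := (continuous_apply i).continuousAt.comp hc
    have hpi : 0 < ξ 0 i := by rw [hξ0]; exact hpos i
    exact hci.eventually (eventually_gt_nhds hpi)
  obtain ⟨ε₀, hε₀pos, hball⟩ := Metric.eventually_nhds_iff_ball.mp hev
  refine ⟨ε₀, hε₀pos, ξ, ?_, hξ0, ?_⟩
  · have hsub : Set.Ioo (-ε₀) ε₀ ⊆ S := by
      intro x hx
      have : x ∈ Metric.ball (0:ℝ) ε₀ := by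
        rw [Real.ball_eq_Ioo]; simpa using hx
      exact (hball x this).1
    exact (hξA.mono hsub).analyticOn
  · intro ε hε
    have hb : ε ∈ Metric.ball (0:ℝ) ε₀ := by
      rw [Real.ball_eq_Ioo]; simpa using hε
    obtain ⟨hεS, hεpos⟩ := hball ε hb
    obtain ⟨⟨h1, h2⟩, h3⟩ := hmain ε hεS
    exact ⟨⟨h1, h2, hεpos⟩, h3⟩
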